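/- arXiv:0908.0390 — 10 statements merged into one kernel-verified Lean document; each statement's English description precedes it below -/
import Mathlib

section
/- Let n, f be natural numbers with n > 5f, let P be a multiset of n real numbers, and let U be a submultiset of P of cardinality m with m ≥ n − f. Then the (2f+1)-th smallest element of P lies in the interval [min U, max U], i.e., min U ≤ P_{2f+1} ≤ max U. -/
/-- `kth P k` is the `k`-th smallest element (1-based, counted with multiplicity)
of the multiset `P` of reals. -/
noncomputable def kth (P : Multiset ℝ) (k : ℕ) : ℝ :=
  (P.sort (· ≤ ·)).getD (k - 1) 0

/-- The minimum of a (nonempty) multiset of reals: its 1st smallest element. -/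
noncomputable def mmin (U : Multiset ℝ) : ℝ := kth U 1

/-- The maximum of a (nonempty) multiset of reals: its `card`-th smallest element. -/
noncomputable def mmax (U : Multiset ℝ) : ℝ := kth U (Multiset.card U)

lemma sorted_getElem_mono {l : List ℝ} (hl : l.Pairwise (· ≤ ·)) {i j : ℕ}
    (hi : i < l.length) (hj : j < l.length) (hij : i ≤ j) : l[i] ≤ l[j] :=
  hl.rel_get_of_le (a := ⟨i, hi⟩) (b := ⟨j, hj⟩) hij

lemma mmin_le_mem (U : Multiset ℝ) {u : ℝ} (hu : u ∈ U) : mmin U ≤ u := by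
  set l := U.sort (· ≤ ·) with hl
  have hsort : l.Pairwise (· ≤ ·) := U.pairwise_sort _
  have hul : u ∈ l := by rw [hl, Multiset.mem_sort]; exact hu
  obtain ⟨i, hiL, hi⟩ := List.mem_iff_getElem.mp hul
  have h0 : (0 : ℕ) < l.length := lt_of_le_of_lt (Nat.zero_le _) hiL
  have hmono : l[0] ≤ l[i] := sorted_getElem_mono hsort h0 hiL (Nat.zero_le _)
  have hmin : mmin U = l[0] := List.getD_eq_getElem l 0 h0
  rw [hmin, ← hi]; exact hmono

lemma mem_le_mmax (U : Multiset ℝ) {u : ℝ} (hu : u ∈ U) : u ≤ mmax U := by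
  set l := U.sort (· ≤ ·) with hl
  have hsort : l.Pairwise (· ≤ ·) := U.pairwise_sort _
  have hul : u ∈ l := by rw [hl, Multiset.mem_sort]; exact hu
  obtain ⟨i, hiL, hi⟩ := List.mem_iff_getElem.mp hul
  have hlen : l.length = Multiset.card U := U.length_sort _
  have hpos : 0 < l.length := lt_of_le_of_lt (Nat.zero_le _) hiL
  have hlast : l.length - 1 < l.length := Nat.sub_lt hpos one_pos
  have hmono : l[i] ≤ l[l.length - 1] :=
    sorted_getElem_mono hsort hiL hlast (by omega)
  have hmax : mmax U = l[l.length - 1] := by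
    show l.getD (Multiset.card U - 1) 0 = _
    rw [← hlen]
    exact List.getD_eq_getElem l 0 hlast
  rw [hmax, ← hi]; exact hmono

theorem stmt_0 (n f : ℕ) (hnf : n > 5 * f) (P U : Multiset ℝ)
    (hP : Multiset.card P = n) (hUP : U ≤ P) (m : ℕ) (hm : Multiset.card U = m)
    (hmf : m ≥ n - f) :
    mmin U ≤ kth P (2 * f + 1) ∧ kth P (2 * f + 1) ≤ mmax U := by
  classical
  set L := P.sort (· ≤ ·) with hL
  have hsort : L.Pairwise (· ≤ ·) := P.pairwise_sort _
  have hlen : L.length = n := by rw [hL, Multiset.length_sort, hP]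
  have hmn : m ≤ n := by rw [← hm, ← hP]; exact Multiset.card_le_card hUP
  have hcardPU : Multiset.card (P - U) ≤ f := by
    rw [Multiset.card_sub hUP, hP, hm]; omega
  have h2f : 2 * f < n := by omega
  have h2f' : 2 * f < L.length := by omega
  set x := kth P (2 * f + 1) with hx
  have hxval : x = L[2 * f] := by
    show L.getD (2 * f + 1 - 1) 0 = _
    simp only [Nat.add_sub_cancel]
    exact List.getD_eq_getElem L 0 h2f'
  have hsplit : P - U + U = P := tsub_add_cancel_of_le hUP
  have hcountP : ∀ p : ℝ → Prop, ∀ _ : DecidablePred p,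
      Multiset.countP p P = L.countP (fun a => decide (p a)) := by
    intro p hp
    rw [show Multiset.countP p P = Multiset.countP p ↑L by rw [hL, Multiset.sort_eq]]
    simp [Multiset.coe_countP]
  -- lower count : at least 2f+1 elements of P are ≤ x
  have hlow : 2 * f + 1 ≤ Multiset.countP (· ≤ x) P := by
    rw [hcountP (· ≤ x) inferInstance]
    have hdecomp : L = L.take (2 * f + 1) ++ L.drop (2 * f + 1) := (List.take_append_drop _ _).symm
    have htlen : (L.take (2 * f + 1)).length = 2 * f + 1 := by
      rw [List.length_take]; omega
    have hall : ∀ a ∈ L.take (2 * f + 1), decide (a ≤ x) = true := by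
      intro a ha
      obtain ⟨i, hiT, hi⟩ := List.mem_iff_getElem.mp ha
      have hilt : i < 2 * f + 1 := by have := hiT; omega
      have hiL : i < L.length := by omega
      have hgt : (L.take (2 * f + 1))[i] = L[i] := List.getElem_take (xs := L)
      have hmono : L[i] ≤ L[2 * f] := sorted_getElem_mono hsort hiL h2f' (by omega)
      simp only [decide_eq_true_eq]
      rw [hxval, ← hi, hgt]
      exact hmono
    calc 2 * f + 1 = List.countP (fun a => decide (a ≤ x)) (L.take (2 * f + 1)) := by
              rw [List.countP_eq_length.mpr hall, htlen]
      _ ≤ _ := by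
        conv_rhs => rw [hdecomp]
        rw [List.countP_append]; omega
  -- upper count : at least n - 2f elements of P are ≥ x
  have hhigh : n - 2 * f ≤ Multiset.countP (x ≤ ·) P := by
    rw [hcountP (x ≤ ·) inferInstance]
    have hdecomp : L = L.take (2 * f) ++ L.drop (2 * f) := (List.take_append_drop _ _).symm
    have hdlen : (L.drop (2 * f)).length = n - 2 * f := by
      rw [List.length_drop]; omega
    have hall : ∀ a ∈ L.drop (2 * f), decide (x ≤ a) = true := by
      intro a ha
      obtain ⟨i, hiT, hi⟩ := List.mem_iff_getElem.mp ha
      have hiL : 2 * f + i < L.length := by have := hiT; omega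
      have hgt : (L.drop (2 * f))[i] = L[2 * f + i] := List.getElem_drop (xs := L)
      have hmono : L[2 * f] ≤ L[2 * f + i] := sorted_getElem_mono hsort h2f' hiL (by omega)
      simp only [decide_eq_true_eq]
      rw [hxval, ← hi, hgt]
      exact hmono
    calc n - 2 * f = List.countP (fun a => decide (x ≤ a)) (L.drop (2 * f)) := by
              rw [List.countP_eq_length.mpr hall, hdlen]
      _ ≤ _ := by
        conv_rhs => rw [hdecomp]
        rw [List.countP_append]; omega
  constructor
  · by_contra h
    push_neg at h
    have hUcount : Multiset.countP (· ≤ x) U = 0 := by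
      rw [Multiset.countP_eq_zero]
      intro a ha hax
      exact absurd (le_trans (mmin_le_mem U ha) hax) (not_le.mpr h)
    have hsum : Multiset.countP (· ≤ x) P
        = Multiset.countP (· ≤ x) (P - U) + Multiset.countP (· ≤ x) U := by
      rw [← Multiset.countP_add, hsplit]
    have hle : Multiset.countP (· ≤ x) (P - U) ≤ f :=
      le_trans (Multiset.countP_le_card _ _) hcardPU
    omega
  · by_contra h
    push_neg at h
    have hUcount : Multiset.countP (x ≤ ·) U = 0 := by
      rw [Multiset.countP_eq_zero]
      intro a ha hax
      exact absurd (le_trans hax (mem_le_mmax U ha)) (not_le.mpr h)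
    have hsum : Multiset.countP (x ≤ ·) P
        = Multiset.countP (x ≤ ·) (P - U) + Multiset.countP (x ≤ ·) U := by
      rw [← Multiset.countP_add, hsplit]
    have hle : Multiset.countP (x ≤ ·) (P - U) ≤ f :=
      le_trans (Multiset.countP_le_card _ _) hcardPU
    omega
end

section
/- Let n, f be natural numbers with n > 5f, let P be a multiset of n real numbers, and let U be a submultiset of P of cardinality m with m ≥ n − f. Then the (n−2f)-th smallest element of P lies in the interval [min U, max U], i.e., min U ≤ P_{n−2f} ≤ max U. -/
private lemma sorted_getElem_le {l : List ℝ} (hl : l.Pairwise (· ≤ ·)) {i j : ℕ}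
    (hij : i ≤ j) (hj : j < l.length) : l[i]'(lt_of_le_of_lt hij hj) ≤ l[j] := by
  rcases eq_or_lt_of_le hij with h | h
  · subst h; rfl
  · exact List.pairwise_iff_getElem.mp hl i j (lt_of_le_of_lt hij hj) hj h

private lemma filter_lt_card {l : List ℝ} (hl : l.Pairwise (· ≤ ·)) {k : ℕ}
    (hk : k < l.length) {x : ℝ} (hx : x = l[k]) :
    (l.filter (fun y => y < x)).length ≤ k := by
  classical
  conv_lhs => rw [← List.take_append_drop k l]
  rw [List.filter_append, List.length_append]
  have h2 : (l.drop k).filter (fun y => decide (y < x)) = [] := by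
    rw [List.filter_eq_nil_iff]
    intro y hy
    obtain ⟨j, hj, rfl⟩ := List.mem_iff_getElem.mp hy
    rw [List.getElem_drop]
    simp only [decide_eq_true_eq, not_lt, hx]
    exact sorted_getElem_le hl (Nat.le_add_right k j) (by simp at hj; omega)
  rw [h2]
  simpa using le_trans (List.length_filter_le _ _) (by simp)

private lemma filter_gt_card {l : List ℝ} (hl : l.Pairwise (· ≤ ·)) {k : ℕ}
    (hk : k < l.length) {x : ℝ} (hx : x = l[k]) :
    (l.filter (fun y => x < y)).length ≤ l.length - (k + 1) := by
  classical
  conv_lhs => rw [← List.take_append_drop (k+1) l]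
  rw [List.filter_append, List.length_append]
  have h2 : (l.take (k+1)).filter (fun y => decide (x < y)) = [] := by
    rw [List.filter_eq_nil_iff]
    intro y hy
    obtain ⟨j, hj, rfl⟩ := List.mem_iff_getElem.mp hy
    rw [List.getElem_take]
    simp only [decide_eq_true_eq, not_lt, hx]
    have hjk : j ≤ k := by simp at hj; omega
    exact sorted_getElem_le hl hjk hk
  rw [h2]
  simpa using le_trans (List.length_filter_le _ _) (by simp)

theorem stmt_1 (n f : ℕ) (hnf : n > 5 * f) (P U : Multiset ℝ)
    (hP : Multiset.card P = n) (hUP : U ≤ P) (m : ℕ) (hm : Multiset.card U = m)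
    (hmf : m ≥ n - f) :
    mmin U ≤ kth P (n - 2 * f) ∧ kth P (n - 2 * f) ≤ mmax U := by
  classical
  set l := P.sort (· ≤ ·) with hl
  have hlsort : l.Pairwise (· ≤ ·) := P.pairwise_sort _
  have hllen : l.length = n := by rw [hl, Multiset.length_sort, hP]
  set u := U.sort (· ≤ ·) with hu
  have husort : u.Pairwise (· ≤ ·) := U.pairwise_sort _
  have hulen : u.length = m := by rw [hu, Multiset.length_sort, hm]
  have hm1 : 1 ≤ m := by omega
  have hk : n - 2 * f - 1 < l.length := by omega
  have hx : kth P (n - 2 * f) = l[n - 2 * f - 1] := List.getD_eq_getElem l 0 hk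
  set x := kth P (n - 2 * f) with hxdef
  have h0 : 0 < u.length := by omega
  have hminU : mmin U = u[0] := List.getD_eq_getElem u 0 h0
  have hmaxU : mmax U = u[m - 1] := by
    show u.getD (Multiset.card U - 1) 0 = _
    rw [hm]; exact List.getD_eq_getElem u 0 (by omega)
  have hmin_le : ∀ y ∈ U, mmin U ≤ y := by
    intro y hy
    rw [← Multiset.mem_sort (· ≤ ·), ← hu] at hy
    obtain ⟨j, hj, rfl⟩ := List.mem_iff_getElem.mp hy
    rw [hminU]
    exact sorted_getElem_le husort (Nat.zero_le j) hj
  have hle_max : ∀ y ∈ U, y ≤ mmax U := by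
    intro y hy
    rw [← Multiset.mem_sort (· ≤ ·), ← hu] at hy
    obtain ⟨j, hj, rfl⟩ := List.mem_iff_getElem.mp hy
    rw [hmaxU]
    exact sorted_getElem_le husort (by omega) (by omega)
  have hPl : (↑l : Multiset ℝ) = P := Multiset.sort_eq _ _
  constructor
  · by_contra h
    push_neg at h
    have hall : ∀ y ∈ U, x < y := fun y hy => lt_of_lt_of_le h (hmin_le y hy)
    have hUf : U.filter (fun y => x < y) = U := Multiset.filter_eq_self.mpr hall
    have hle : Multiset.card (U.filter (fun y => x < y))
        ≤ Multiset.card (P.filter (fun y => x < y)) :=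
      Multiset.card_le_card (Multiset.filter_le_filter _ hUP)
    rw [hUf, hm, ← hPl] at hle
    rw [Multiset.filter_coe, Multiset.coe_card] at hle
    have := filter_gt_card hlsort hk hx
    omega
  · by_contra h
    push_neg at h
    have hall : ∀ y ∈ U, y < x := fun y hy => lt_of_le_of_lt (hle_max y hy) h
    have hUf : U.filter (fun y => y < x) = U := Multiset.filter_eq_self.mpr hall
    have hle : Multiset.card (U.filter (fun y => y < x))
        ≤ Multiset.card (P.filter (fun y => y < x)) :=
      Multiset.card_le_card (Multiset.filter_le_filter _ hUP)
    rw [hUf, hm, ← hPl] at hle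
    rw [Multiset.filter_coe, Multiset.coe_card] at hle
    have := filter_lt_card hlsort hk hx
    omega
end

section
/- Let n, f be natural numbers with n > 5f, let P be a multiset of n real numbers, and let U be a submultiset of P of cardinality m with m ≥ n − f. Then for every element p of U, the trimmed range is contained in the range of correct positions: min U ≤ min(p, P_{2f+1}) and max(p, P_{n−2f}) ≤ max U. -/
lemma lemA {L : List ℝ} (hs : L.Pairwise (· ≤ ·)) {a : ℝ} {k : ℕ} (hk : k < L.length)
    (hc : L.countP (fun x => decide (x < a)) ≤ k) : a ≤ L[k] := by
  by_contra h
  push_neg at h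
  have hlen : (L.take (k+1)).length = k + 1 := by simp [List.length_take]; omega
  have htake : (L.take (k+1)).countP (fun x => decide (x < a)) = (L.take (k+1)).length :=
    List.countP_eq_length.mpr (by
      intro x hx
      obtain ⟨i, hi, rfl⟩ := List.getElem_of_mem hx
      simp only [decide_eq_true_iff]
      have hi' : i < L.length := lt_of_lt_of_le hi (by simp [List.length_take])
      rw [List.getElem_take]
      calc L[i] ≤ L[k] := hs.rel_get_of_le (by
              rw [hlen] at hi; exact Fin.mk_le_mk.mpr (by omega))
        _ < a := h)
  have hle := (L.take_sublist (k+1)).countP_le (p := fun x => decide (x < a))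
  rw [htake, hlen] at hle
  omega

lemma lemB {L : List ℝ} (hs : L.Pairwise (· ≤ ·)) {a : ℝ} {k : ℕ} (hk : k < L.length)
    (hc : L.countP (fun x => decide (a < x)) ≤ L.length - k - 1) : L[k] ≤ a := by
  by_contra h
  push_neg at h
  have hlen : (L.drop k).length = L.length - k := by simp
  have hdrop : (L.drop k).countP (fun x => decide (a < x)) = (L.drop k).length :=
    List.countP_eq_length.mpr (by
      intro x hx
      obtain ⟨i, hi, rfl⟩ := List.getElem_of_mem hx
      simp only [decide_eq_true_iff]
      rw [List.getElem_drop]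
      calc a < L[k] := h
        _ ≤ L[k + i] := hs.rel_get_of_le (by
              rw [hlen] at hi
              exact Fin.mk_le_mk.mpr (by omega)))
  have hle := (L.drop_sublist k).countP_le (p := fun x => decide (a < x))
  rw [hdrop, hlen] at hle
  omega

lemma mmin_le {U : Multiset ℝ} {x : ℝ} (hx : x ∈ U) : mmin U ≤ x := by
  set L := U.sort (· ≤ ·) with hL
  have hs : L.Pairwise (· ≤ ·) := U.pairwise_sort _
  have hxL : x ∈ L := by rw [hL, Multiset.mem_sort]; exact hx
  obtain ⟨i, hi, rfl⟩ := List.getElem_of_mem hxL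
  have h0 : 0 < L.length := by omega
  have : mmin U = L[0] := by
    rw [mmin, kth]
    simp only [Nat.sub_self]
    exact List.getD_eq_getElem L 0 h0
  rw [this]
  exact hs.rel_get_of_le (Fin.mk_le_mk.mpr (Nat.zero_le i))

lemma le_mmax {U : Multiset ℝ} {x : ℝ} (hx : x ∈ U) : x ≤ mmax U := by
  set L := U.sort (· ≤ ·) with hL
  have hs : L.Pairwise (· ≤ ·) := U.pairwise_sort _
  have hxL : x ∈ L := by rw [hL, Multiset.mem_sort]; exact hx
  obtain ⟨i, hi, rfl⟩ := List.getElem_of_mem hxL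
  have hcard : Multiset.card U = L.length := (U.length_sort _).symm
  have h0 : L.length - 1 < L.length := by omega
  have : mmax U = L[L.length - 1] := by
    rw [mmax, kth, hcard]
    exact List.getD_eq_getElem L 0 h0
  rw [this]
  exact hs.rel_get_of_le (Fin.mk_le_mk.mpr (by omega))

theorem stmt_2 (n f : ℕ) (hnf : n > 5 * f) (P U : Multiset ℝ)
    (hP : Multiset.card P = n) (hUP : U ≤ P) (m : ℕ) (hm : Multiset.card U = m)
    (hmf : m ≥ n - f) :
    ∀ p ∈ U, mmin U ≤ min p (kth P (2 * f + 1)) ∧ max p (kth P (n - 2 * f)) ≤ mmax U := by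
  intro p hp
  obtain ⟨V, rfl⟩ := Multiset.le_iff_exists_add.mp hUP
  have hcardV : Multiset.card V ≤ f := by
    have := hP
    rw [Multiset.card_add, hm] at this
    omega
  set L := (U + V).sort (· ≤ ·) with hL
  have hs : L.Pairwise (· ≤ ·) := Multiset.pairwise_sort _ _
  have hlen : L.length = n := by rw [hL, Multiset.length_sort]; exact hP
  have hm_le : m ≤ n := by
    rw [← hP, ← hm, Multiset.card_add]; omega
  have hcount1 : L.countP (fun x => decide (x < mmin U)) ≤ f := by
    have : L.countP (fun x => decide (x < mmin U))
        = Multiset.countP (fun x => decide (x < mmin U)) (U + V) := by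
      rw [hL, ← Multiset.coe_countP, Multiset.sort_eq]; simp
    rw [this, Multiset.countP_add]
    have h1 : Multiset.countP (fun x => decide (x < mmin U)) U = 0 := by
      rw [Multiset.countP_eq_zero]
      intro x hx
      simp only [decide_eq_true_iff, not_lt]
      exact mmin_le hx
    have h2 : Multiset.countP (fun x => decide (x < mmin U)) V ≤ Multiset.card V :=
      Multiset.countP_le_card _ _
    omega
  have hcount2 : L.countP (fun x => decide (mmax U < x)) ≤ f := by
    have : L.countP (fun x => decide (mmax U < x))
        = Multiset.countP (fun x => decide (mmax U < x)) (U + V) := by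
      rw [hL, ← Multiset.coe_countP, Multiset.sort_eq]; simp
    rw [this, Multiset.countP_add]
    have h1 : Multiset.countP (fun x => decide (mmax U < x)) U = 0 := by
      rw [Multiset.countP_eq_zero]
      intro x hx
      simp only [decide_eq_true_iff, not_lt]
      exact le_mmax hx
    have h2 : Multiset.countP (fun x => decide (mmax U < x)) V ≤ Multiset.card V :=
      Multiset.countP_le_card _ _
    omega
  refine ⟨le_min (mmin_le hp) ?_, max_le (le_mmax hp) ?_⟩
  · have hk : 2 * f < L.length := by omega
    have : kth (U + V) (2 * f + 1) = L[2 * f] := by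
      rw [kth]
      simp only [Nat.add_sub_cancel]
      exact List.getD_eq_getElem L 0 hk
    rw [this]
    exact lemA hs hk (by omega)
  · have hk : n - 2 * f - 1 < L.length := by omega
    have : kth (U + V) (n - 2 * f) = L[n - 2 * f - 1] := by
      rw [kth]
      exact List.getD_eq_getElem L 0 hk
    rw [this]
    exact lemB hs hk (by omega)
end

section
/- Let n, f be natural numbers with n > 5f, let P be a multiset of n real numbers, and let U be a submultiset of P of cardinality m with m ≥ n − f. If min U < max U, then dest(P, min U) > min U or dest(P, max U) < max U; that is, whenever the correct robots are not all at the same location, at least one of the two extreme correct robots computes a destination different from its current position. (Non-triviality of Algorithm 1.) -/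
/-- The destination computed by Algorithm 1 by a robot at position `p` observing
the configuration `P` of `n` robots (at most `f` Byzantine): the midpoint of the
trimmed range `[min(p, P_{2f+1}), max(p, P_{n-2f})]`. -/
noncomputable def dest (n f : ℕ) (P : Multiset ℝ) (p : ℝ) : ℝ :=
  (min p (kth P (2 * f + 1)) + max p (kth P (n - 2 * f))) / 2

lemma aux_countP_ge_of_prefix (l : List ℝ) (p : ℝ → Bool) (k : ℕ) (hk : k ≤ l.length)
    (h : ∀ i (hi : i < k), p (l[i]'(lt_of_lt_of_le hi hk)) = true) : k ≤ l.countP p := by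
  have h1 : l.countP p = (l.take k).countP p + (l.drop k).countP p := by
    rw [← List.countP_append, List.take_append_drop]
  have h2 : (l.take k).countP p = (l.take k).length := by
    apply List.countP_eq_length.mpr
    intro x hx
    obtain ⟨⟨i, hi⟩, rfl⟩ := List.mem_iff_get.mp hx
    have hik : i < k := by
      have := hi; simp [List.length_take] at this; omega
    rw [List.get_eq_getElem, List.getElem_take]
    exact h i hik
  rw [List.length_take, min_eq_left hk] at h2
  omega

lemma aux_countP_ge_of_suffix (l : List ℝ) (p : ℝ → Bool) (j k : ℕ) (hj : j + k = l.length)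
    (h : ∀ i (hi : i < k), p (l[j + i]'(by omega)) = true) : k ≤ l.countP p := by
  have h1 : l.countP p = (l.take j).countP p + (l.drop j).countP p := by
    rw [← List.countP_append, List.take_append_drop]
  have h2 : (l.drop j).countP p = (l.drop j).length := by
    apply List.countP_eq_length.mpr
    intro x hx
    obtain ⟨⟨i, hi⟩, rfl⟩ := List.mem_iff_get.mp hx
    have hik : i < k := by
      have := hi; simp [List.length_drop] at this; omega
    rw [List.get_eq_getElem, List.getElem_drop]
    exact h i hik
  rw [List.length_drop] at h2
  omega

lemma aux_countP_le (P U : Multiset ℝ) (hUP : U ≤ P) (p : ℝ → Prop) [DecidablePred p]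
    (h : ∀ x ∈ U, ¬ p x) :
    Multiset.countP p P ≤ Multiset.card P - Multiset.card U := by
  have hPd : P - U + U = P := tsub_add_cancel_of_le hUP
  have h1 : Multiset.countP p P = Multiset.countP p (P - U) + Multiset.countP p U := by
    rw [← Multiset.countP_add, hPd]
  have h2 : Multiset.countP p U = 0 := Multiset.countP_eq_zero.mpr h
  have h3 : Multiset.countP p (P - U) ≤ Multiset.card (P - U) := Multiset.countP_le_card _ _
  have h4 : Multiset.card (P - U) = Multiset.card P - Multiset.card U := by
    have := congrArg Multiset.card hPd
    rw [Multiset.card_add] at this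
    omega
  omega

theorem stmt_5 (n f : ℕ) (hnf : n > 5 * f) (P U : Multiset ℝ)
    (hP : Multiset.card P = n) (hUP : U ≤ P) (m : ℕ) (hm : Multiset.card U = m)
    (hmf : m ≥ n - f) (hne : mmin U < mmax U) :
    dest n f P (mmin U) > mmin U ∨ dest n f P (mmax U) < mmax U := by
  set a := mmin U with ha
  set b := mmax U with hb
  -- U is nonempty
  have hm1 : 1 ≤ m := by
    by_contra hc
    have hm0 : m = 0 := by omega
    have : U = 0 := Multiset.card_eq_zero.mp (hm.trans hm0)
    rw [ha, hb, this] at hne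
    simp [mmin, mmax, kth] at hne
  have hnm : n - m ≤ f := by omega
  -- sorted lists
  set l := P.sort (· ≤ ·) with hl
  have hls : l.Pairwise (· ≤ ·) := P.pairwise_sort _
  have hll : l.length = n := by rw [hl, Multiset.length_sort, hP]
  set lu := U.sort (· ≤ ·) with hlu
  have hlus : lu.Pairwise (· ≤ ·) := U.pairwise_sort _
  have hlul : lu.length = m := by rw [hlu, Multiset.length_sort, hm]
  -- a ≤ x ≤ b for x ∈ U
  have hax : ∀ x ∈ U, a ≤ x ∧ x ≤ b := by
    intro x hx
    have hx' : x ∈ lu := by rw [hlu, Multiset.mem_sort]; exact hx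
    obtain ⟨⟨i, hi⟩, rfl⟩ := List.mem_iff_get.mp hx'
    constructor
    · have h0 : (0 : ℕ) < lu.length := by omega
      have hle := hlus.rel_get_of_le (a := ⟨0, h0⟩) (b := ⟨i, hi⟩)
        (Fin.mk_le_mk.mpr (Nat.zero_le _))
      have he : a = lu[0] := by
        rw [ha]; simp only [mmin, kth, ← hlu]
        exact List.getD_eq_getElem lu 0 h0
      rw [he]; simpa using hle
    · have hmm : m - 1 < lu.length := by omega
      have hle := hlus.rel_get_of_le (a := ⟨i, hi⟩) (b := ⟨m - 1, hmm⟩)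
        (Fin.mk_le_mk.mpr (by omega))
      have he : b = lu[m - 1] := by
        rw [hb]; simp only [mmax, kth, ← hlu, hm]
        exact List.getD_eq_getElem lu 0 hmm
      rw [he]; simpa using hle
  -- count bounds
  have hca : (Multiset.countP (fun x => x < a) P) ≤ f := by
    have := aux_countP_le P U hUP (fun x => x < a) (fun x hx => not_lt.mpr (hax x hx).1)
    omega
  have hcb : (Multiset.countP (fun x => b < x) P) ≤ f := by
    have := aux_countP_le P U hUP (fun x => b < x) (fun x hx => not_lt.mpr (hax x hx).2)
    omega
  have hcoeP : ∀ (p : ℝ → Prop) [DecidablePred p],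
      Multiset.countP p P = l.countP (fun x => decide (p x)) := by
    intro p _
    conv_lhs => rw [← Multiset.sort_eq P (· ≤ ·), ← hl]
    simp [Multiset.coe_countP]
  -- index facts
  have h2f : 2 * f < n := by omega
  have hn2f : n - 2 * f - 1 < n := by omega
  have hb1 : 2 * f < l.length := by omega
  have hb2 : n - 2 * f - 1 < l.length := by omega
  have hk1 : kth P (2 * f + 1) = l[2 * f]'hb1 := by
    simp only [kth, ← hl]
    exact List.getD_eq_getElem l 0 hb1
  have hk2 : kth P (n - 2 * f) = l[n - 2 * f - 1]'hb2 := by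
    simp only [kth, ← hl]
    exact List.getD_eq_getElem l 0 hb2
  -- a ≤ k1
  have hak1 : a ≤ kth P (2 * f + 1) := by
    by_contra hc
    push_neg at hc
    have hcount : 2 * f + 1 ≤ l.countP (fun x => decide (x < a)) := by
      apply aux_countP_ge_of_prefix l _ (2 * f + 1) (by omega)
      intro i hi
      simp only [decide_eq_true_eq]
      calc l[i]'(by omega) ≤ l[2 * f]'(by omega) := by
            have := hls.rel_get_of_le (a := ⟨i, by omega⟩) (b := ⟨2 * f, by omega⟩)
              (Fin.mk_le_mk.mpr (by omega))
            simpa using this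
        _ < a := by rw [← hk1]; exact hc
    rw [hcoeP] at hca
    omega
  -- k2 ≤ b
  have hk2b : kth P (n - 2 * f) ≤ b := by
    by_contra hc
    push_neg at hc
    have hcount : 2 * f + 1 ≤ l.countP (fun x => decide (b < x)) := by
      apply aux_countP_ge_of_suffix l _ (n - 2 * f - 1) (2 * f + 1) (by omega)
      intro i hi
      simp only [decide_eq_true_eq]
      calc b < l[n - 2 * f - 1]'(by omega) := by rw [← hk2]; exact hc
        _ ≤ l[n - 2 * f - 1 + i]'(by omega) := by
            have := hls.rel_get_of_le (a := ⟨n - 2 * f - 1, by omega⟩)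
              (b := ⟨n - 2 * f - 1 + i, by omega⟩) (Fin.mk_le_mk.mpr (by omega))
            simpa using this
    rw [hcoeP] at hcb
    omega
  -- k1 ≤ k2
  have hk12 : kth P (2 * f + 1) ≤ kth P (n - 2 * f) := by
    rw [hk1, hk2]
    have := hls.rel_get_of_le (a := ⟨2 * f, by omega⟩) (b := ⟨n - 2 * f - 1, by omega⟩)
      (Fin.mk_le_mk.mpr (by omega))
    simpa using this
  -- conclude
  by_contra hcon
  push_neg at hcon
  obtain ⟨h1, h2⟩ := hcon
  rw [dest] at h1 h2
  rw [min_eq_left hak1] at h1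
  rw [max_eq_left hk2b] at h2
  have hmax : max a (kth P (n - 2 * f)) ≤ a := by linarith
  have hmin : b ≤ min b (kth P (2 * f + 1)) := by linarith
  have e1 : kth P (n - 2 * f) ≤ a := le_trans (le_max_right _ _) hmax
  have e2 : b ≤ kth P (2 * f + 1) := le_trans hmin (min_le_right _ _)
  linarith
end

section
/- Let n, f be natural numbers with n > 5f, let P be a multiset of n real numbers, and let U be a submultiset of P of cardinality m with m ≥ n − f. If p is an element of U satisfying the election predicate, i.e., p ≤ P_{f+1} or p ≥ P_{n−f}, then p ≤ U_{f+1} or p ≥ U_{m−f}; that is, only correct robots at the extremes of the correct positions can be elected. -/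
/-- An order embedding of `Fin a` into `Fin b` grows at least as fast as the identity. -/
lemma emb_step {a b : ℕ} (e : Fin a ↪o Fin b) (k : ℕ) :
    ∀ i j : Fin a, (i : ℕ) + k = (j : ℕ) → (e i : ℕ) + k ≤ (e j : ℕ) := by
  induction k with
  | zero => intro i j h; have : i = j := Fin.ext (by omega); simp [this]
  | succ k ih =>
    intro i j h
    have hlt : (i : ℕ) + k < a := by omega
    have := ih i ⟨(i : ℕ) + k, hlt⟩ rfl
    have hstep : (e ⟨(i : ℕ) + k, hlt⟩ : ℕ) < (e j : ℕ) := by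
      have : (⟨(i : ℕ) + k, hlt⟩ : Fin a) < j := by
        simp only [Fin.lt_iff_val_lt_val]; omega
      exact Fin.lt_iff_val_lt_val.mp (e.strictMono this)
    omega

lemma emb_lb {a b : ℕ} (e : Fin a ↪o Fin b) (i : Fin a) : (i : ℕ) ≤ (e i : ℕ) := by
  rcases Nat.eq_zero_or_pos a with h | h
  · exact absurd i.2 (by omega)
  · have h0 : (0 : ℕ) < a := h
    have := emb_step e (i : ℕ) ⟨0, h0⟩ i (by simp)
    omega

lemma emb_ub {a b : ℕ} (e : Fin a ↪o Fin b) (i : Fin a) (ha : 0 < a) :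
    (e i : ℕ) ≤ (i : ℕ) + (b - a) := by
  have hlast : a - 1 < a := by omega
  have := emb_step e (a - 1 - (i : ℕ)) i ⟨a - 1, hlast⟩ (by simp only [Fin.val_mk]; omega)
  have h2 := (e ⟨a - 1, hlast⟩).2
  omega

lemma sort_sublist {U P : Multiset ℝ} (hUP : U ≤ P) :
    List.Sublist (U.sort (· ≤ ·)) (P.sort (· ≤ ·)) := by
  have h : ((U.sort (· ≤ ·) : List ℝ) : Multiset ℝ) ≤ ↑(P.sort (· ≤ ·)) := by
    simpa [Multiset.sort_eq] using hUP
  exact List.sublist_of_subperm_of_pairwise (Multiset.coe_le.mp h)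
    (Multiset.pairwise_sort _ _) (Multiset.pairwise_sort _ _)

theorem stmt_8 (n f : ℕ) (hnf : n > 5 * f) (P U : Multiset ℝ)
    (hP : Multiset.card P = n) (hUP : U ≤ P) (m : ℕ) (hm : Multiset.card U = m)
    (hmf : m ≥ n - f) (p : ℝ) (hp : p ∈ U)
    (helected : p ≤ kth P (f + 1) ∨ p ≥ kth P (n - f)) :
    p ≤ kth U (f + 1) ∨ p ≥ kth U (m - f) := by
  classical
  have hL : (U.sort (· ≤ ·)).length = m := by rw [Multiset.length_sort, hm]
  have hL' : (P.sort (· ≤ ·)).length = n := by rw [Multiset.length_sort, hP]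
  have hsub := sort_sublist hUP
  obtain ⟨e, he⟩ := List.sublist_iff_exists_fin_orderEmbedding_get_eq.mp hsub
  have hmn : m ≤ n := by rw [← hm, ← hP]; exact Multiset.card_le_card hUP
  have hm4 : m > 4 * f := by omega
  rcases helected with h | h
  · left
    have hfm : f < (U.sort (· ≤ ·)).length := by omega
    have hfn : f < (P.sort (· ≤ ·)).length := by omega
    have hkU : kth U (f + 1) = (U.sort (· ≤ ·)).get ⟨f, hfm⟩ := by
      simp [kth, List.getElem?_eq_getElem hfm]
    have hkP : kth P (f + 1) = (P.sort (· ≤ ·)).get ⟨f, hfn⟩ := by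
      simp [kth, List.getElem?_eq_getElem hfn]
    have hle : (⟨f, hfn⟩ : Fin (P.sort (· ≤ ·)).length) ≤ e ⟨f, hfm⟩ := by
      have := emb_lb e ⟨f, hfm⟩
      exact Fin.le_iff_val_le_val.mpr (by simpa using this)
    have hmono := (Multiset.pairwise_sort P (· ≤ ·)).rel_get_of_le hle
    rw [hkU, he ⟨f, hfm⟩]
    rw [hkP] at h
    exact h.trans hmono
  · right
    have hi0 : m - f - 1 < (U.sort (· ≤ ·)).length := by omega
    have ht : n - f - 1 < (P.sort (· ≤ ·)).length := by omega
    have hkU : kth U (m - f) = (U.sort (· ≤ ·)).get ⟨m - f - 1, hi0⟩ := by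
      simp [kth, List.getElem?_eq_getElem hi0]
    have hkP : kth P (n - f) = (P.sort (· ≤ ·)).get ⟨n - f - 1, ht⟩ := by
      simp [kth, List.getElem?_eq_getElem ht]
    have hub := emb_ub e ⟨m - f - 1, hi0⟩ (by omega)
    have hle : e ⟨m - f - 1, hi0⟩ ≤ (⟨n - f - 1, ht⟩ : Fin (P.sort (· ≤ ·)).length) := by
      refine Fin.le_iff_val_le_val.mpr ?_
      simp only [Fin.val_mk] at hub ⊢
      omega
    have hmono := (Multiset.pairwise_sort P (· ≤ ·)).rel_get_of_le hle
    rw [hkU, he ⟨m - f - 1, hi0⟩]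
    rw [hkP] at h
    exact hmono.trans h
end

section
/- Let n, f be natural numbers with n > 5f, let P be a multiset of n real numbers, and let U be a submultiset of P of cardinality m with m ≥ n − f. Then for every element p of U, the computed destination satisfies (p + min U)/2 ≤ dest(P,p) ≤ (p + max U)/2; that is, the destination of a correct robot at position p always lies between the midpoint of p with the smallest correct position and the midpoint of p with the largest correct position, irrespective of the positions of the Byzantine robots. -/
lemma exists_mem_inter {s t P : Multiset ℝ} (hs : s ≤ P) (ht : t ≤ P)
    (h : Multiset.card P < Multiset.card s + Multiset.card t) :
    ∃ x, x ∈ s ∧ x ∈ t := by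
  by_contra hc
  push_neg at hc
  have hle : s + t ≤ P := by
    rw [Multiset.le_iff_count]
    intro a
    rw [Multiset.count_add]
    by_cases ha : a ∈ s
    · have : a ∉ t := hc a ha
      rw [Multiset.count_eq_zero_of_notMem this]
      simpa using Multiset.le_iff_count.mp hs a
    · rw [Multiset.count_eq_zero_of_notMem ha]
      simpa using Multiset.le_iff_count.mp ht a
  have := Multiset.card_le_card hle
  simp only [Multiset.card_add] at this
  omega

lemma kth_lower (n f : ℕ) (hnf : n > 5 * f) (P U : Multiset ℝ)
    (hP : Multiset.card P = n) (hUP : U ≤ P) (hU : Multiset.card U ≥ n - f) :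
    mmin U ≤ kth P (2 * f + 1) := by
  set l := P.sort (· ≤ ·) with hl
  have hlen : l.length = n := by rw [hl, Multiset.length_sort, hP]
  have hTP : (↑(l.take (2 * f + 1)) : Multiset ℝ) ≤ P := by
    rw [← Multiset.sort_eq P (· ≤ ·), ← hl, Multiset.coe_le]
    exact (List.take_sublist _ _).subperm
  have hcardT : Multiset.card (↑(l.take (2 * f + 1)) : Multiset ℝ) = 2 * f + 1 := by
    simp [Multiset.coe_card, List.length_take, hlen]
    omega
  obtain ⟨q, hqT, hqU⟩ := exists_mem_inter hTP hUP (by rw [hcardT, hP]; omega)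
  have hq : q ∈ l.take (2 * f + 1) := hqT
  obtain ⟨i, hi, rfl⟩ := List.getElem_of_mem hq
  rw [List.length_take] at hi
  have hi2 : i < 2 * f + 1 := lt_of_lt_of_le hi (min_le_left _ _)
  have hil : i < l.length := lt_of_lt_of_le hi (min_le_right _ _)
  have h2f : 2 * f < l.length := by omega
  have h1 := (Multiset.pairwise_sort P (· ≤ ·)).rel_get_of_le
    (a := ⟨i, hil⟩) (b := ⟨2 * f, h2f⟩) (by simp only [Fin.mk_le_mk]; omega)
  have heq : kth P (2 * f + 1) = l[2 * f]'h2f := List.getD_eq_getElem _ _ h2f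
  calc mmin U ≤ (l.take (2 * f + 1))[i] := mmin_le hqU
    _ = l[i]'hil := List.getElem_take
    _ ≤ l[2 * f]'h2f := by simpa using h1
    _ = kth P (2 * f + 1) := heq.symm

lemma kth_upper (n f : ℕ) (hnf : n > 5 * f) (P U : Multiset ℝ)
    (hP : Multiset.card P = n) (hUP : U ≤ P) (hU : Multiset.card U ≥ n - f) :
    kth P (n - 2 * f) ≤ mmax U := by
  set l := P.sort (· ≤ ·) with hl
  have hlen : l.length = n := by rw [hl, Multiset.length_sort, hP]
  set k := n - 2 * f - 1 with hk
  have hTP : (↑(l.drop k) : Multiset ℝ) ≤ P := by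
    rw [← Multiset.sort_eq P (· ≤ ·), ← hl, Multiset.coe_le]
    exact (List.drop_sublist _ _).subperm
  have hcardT : Multiset.card (↑(l.drop k) : Multiset ℝ) = 2 * f + 1 := by
    simp [Multiset.coe_card, List.length_drop, hlen]
    omega
  obtain ⟨q, hqT, hqU⟩ := exists_mem_inter hTP hUP (by rw [hcardT, hP]; omega)
  have hq : q ∈ l.drop k := hqT
  obtain ⟨i, hi, rfl⟩ := List.getElem_of_mem hq
  rw [List.length_drop] at hi
  have hkl : k < l.length := by omega
  have hkil : k + i < l.length := by omega
  have h1 := (Multiset.pairwise_sort P (· ≤ ·)).rel_get_of_le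
    (a := ⟨k, hkl⟩) (b := ⟨k + i, hkil⟩) (by simp only [Fin.mk_le_mk]; omega)
  have heq : kth P (n - 2 * f) = l[k]'hkl := List.getD_eq_getElem _ _ hkl
  calc kth P (n - 2 * f) = l[k]'hkl := heq
    _ ≤ l[k + i]'hkil := by simpa using h1
    _ = (l.drop k)[i] := List.getElem_drop.symm
    _ ≤ mmax U := le_mmax hqU

theorem stmt_9 (n f : ℕ) (hnf : n > 5 * f) (P U : Multiset ℝ)
    (hP : Multiset.card P = n) (hUP : U ≤ P) (m : ℕ) (hm : Multiset.card U = m)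
    (hmf : m ≥ n - f) :
    ∀ p ∈ U, (p + mmin U) / 2 ≤ dest n f P p ∧ dest n f P p ≤ (p + mmax U) / 2 := by
  intro p hp
  have hU : Multiset.card U ≥ n - f := by omega
  have h1 := kth_lower n f hnf P U hP hUP hU
  have h2 := kth_upper n f hnf P U hP hUP hU
  have h3 := mmin_le hp
  have h4 := le_mmax hp
  constructor
  · have : mmin U ≤ min p (kth P (2 * f + 1)) := le_min h3 h1
    have hmx : p ≤ max p (kth P (n - 2 * f)) := le_max_left _ _
    unfold dest; linarith
  · have : max p (kth P (n - 2 * f)) ≤ mmax U := max_le h4 h2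
    have hmn : min p (kth P (2 * f + 1)) ≤ p := min_le_left _ _
    unfold dest; linarith
end

section
/- Let n, f be natural numbers with n > 5f, let P be a multiset of n real numbers, and let U be a submultiset of P of cardinality m with m ≥ n − f. Let B and b be real numbers, and suppose S is a submultiset of U of cardinality at least m − 2f such that every element of S is at most B − b, and suppose max U ≤ B. Then for every element p of U, the computed destination satisfies dest(P,p) ≤ B − b/2. -/
lemma kth_le_of_filter {P : Multiset ℝ} {c : ℝ} {k : ℕ} (hk : 1 ≤ k)
    (h : k ≤ Multiset.card (P.filter (· ≤ c))) : kth P k ≤ c := by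
  classical
  set L := P.sort (· ≤ ·) with hL
  have hsorted : L.Pairwise (· ≤ ·) := P.pairwise_sort _
  have hcoe : (↑L : Multiset ℝ) = P := P.sort_eq _
  have hflen : Multiset.card (P.filter (· ≤ c)) = (L.filter (fun x => decide (x ≤ c))).length := by
    rw [← hcoe, Multiset.filter_coe, Multiset.coe_card]
  have hklen : k ≤ L.length := by
    have := Multiset.card_le_card (Multiset.filter_le (· ≤ c) P)
    have hl : L.length = Multiset.card P := P.length_sort _
    omega
  by_contra hc
  push_neg at hc
  have hk1 : k - 1 < L.length := by omega
  have hget : kth P k = L[k-1] := by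
    rw [kth, ← hL, L.getD_eq_getElem _ hk1]
  have hdq : L.drop (k-1) = L[k-1] :: L.drop ((k-1)+1) :=
    List.drop_eq_getElem_cons hk1
  have hds : (L.drop (k-1)).Pairwise (· ≤ ·) := hsorted.drop
  rw [hdq, List.pairwise_cons] at hds
  have hdrop : ∀ x ∈ L.drop (k - 1), ¬ (x ≤ c) := by
    intro x hx hxc
    rw [hdq, List.mem_cons] at hx
    have : L[k-1] ≤ x := by
      rcases hx with rfl | hx
      · exact le_refl _
      · exact hds.1 x hx
    exact absurd (le_trans (hget ▸ this) hxc) (not_le.mpr hc)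
  have hsplit : L.filter (fun x => decide (x ≤ c)) =
      (L.take (k-1)).filter (fun x => decide (x ≤ c)) := by
    conv_lhs => rw [← List.take_append_drop (k-1) L]
    rw [List.filter_append]
    have : (L.drop (k-1)).filter (fun x => decide (x ≤ c)) = [] := by
      rw [List.filter_eq_nil_iff]
      intro a ha
      simpa using hdrop a ha
    simp [this]
  have : (L.filter (fun x => decide (x ≤ c))).length ≤ k - 1 := by
    rw [hsplit]
    calc _ ≤ (L.take (k-1)).length := List.length_filter_le _ _
    _ ≤ k - 1 := by simp
  omega

lemma mem_le_kth_card {U : Multiset ℝ} {x : ℝ} (hx : x ∈ U) :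
    x ≤ kth U (Multiset.card U) := by
  set L := U.sort (· ≤ ·) with hL
  have hsorted : L.Pairwise (· ≤ ·) := U.pairwise_sort _
  have hl : L.length = Multiset.card U := U.length_sort _
  have hxL : x ∈ L := by rw [hL, Multiset.mem_sort]; exact hx
  obtain ⟨i, rfl⟩ := List.mem_iff_get.mp hxL
  have hpos : 0 < L.length := List.length_pos_of_mem hxL
  have hlast : L.length - 1 < L.length := by omega
  have h2 : L.get i ≤ L.get ⟨L.length - 1, hlast⟩ :=
    hsorted.rel_get_of_le (by simp [Fin.le_def]; omega)
  have hget : kth U (Multiset.card U) = L.get ⟨L.length - 1, hlast⟩ := by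
    rw [kth, ← hL, ← hl, L.getD_eq_getElem _ hlast]
    rfl
  rw [hget]; exact h2

theorem stmt_10 (n f : ℕ) (hnf : n > 5 * f) (P U : Multiset ℝ)
    (hP : Multiset.card P = n) (hUP : U ≤ P) (m : ℕ) (hm : Multiset.card U = m)
    (hmf : m ≥ n - f) (B b : ℝ) (S : Multiset ℝ) (hSU : S ≤ U)
    (hScard : Multiset.card S ≥ m - 2 * f) (hS : ∀ x ∈ S, x ≤ B - b)
    (hmaxU : mmax U ≤ B) :
    ∀ p ∈ U, dest n f P p ≤ B - b / 2 := by
  classical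
  intro p hp
  have hSP : S ≤ P := le_trans hSU hUP
  have hcardU : Multiset.card U ≤ Multiset.card P := Multiset.card_le_card hUP
  have h1 : S ≤ P.filter (· ≤ B - b) := Multiset.le_filter.mpr ⟨hSP, hS⟩
  have hA : kth P (2*f+1) ≤ B - b := by
    apply kth_le_of_filter (by omega)
    have := Multiset.card_le_card h1
    omega
  have hUB : ∀ x ∈ U, x ≤ B := fun x hx => le_trans (mem_le_kth_card hx) hmaxU
  have h2 : U ≤ P.filter (· ≤ B) := Multiset.le_filter.mpr ⟨hUP, hUB⟩
  have hB : kth P (n - 2*f) ≤ B := by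
    apply kth_le_of_filter (by omega)
    have := Multiset.card_le_card h2
    omega
  have hpB : p ≤ B := hUB p hp
  rw [dest]
  have h3 := min_le_right p (kth P (2*f+1))
  have h4 := max_le hpB hB
  linarith
end

section
/- Let n, f be natural numbers with n > 5f, let P be a multiset of n real numbers, and let U be a submultiset of P of cardinality m with m ≥ n − f. Let B and b be real numbers, and suppose S is a submultiset of U of cardinality at least m − f such that every element of S is at most B − b. Then for every element p of S, the computed destination satisfies dest(P,p) ≤ B − b; that is, the robots of S compute destinations that again lie at most B − b. -/
open Classical

lemma kth_le_of_count (P : Multiset ℝ) (k : ℕ) (c : ℝ) (hk : 1 ≤ k)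
    (hlen : k ≤ Multiset.card P)
    (hcount : k ≤ Multiset.card (P.filter (· ≤ c))) : kth P k ≤ c := by
  classical
  set l := P.sort (· ≤ ·) with hl
  have hsorted : l.Pairwise (· ≤ ·) := P.pairwise_sort _
  have hlenl : l.length = Multiset.card P := P.length_sort _
  have hi : k - 1 < l.length := by omega
  have hcount' : k ≤ l.countP (fun x => decide (x ≤ c)) := by
    have : (P.filter (· ≤ c)) = ((l : Multiset ℝ).filter (· ≤ c)) := by
      rw [hl, Multiset.sort_eq]
    rw [this] at hcount
    simpa [Multiset.coe_countP, List.countP_eq_length_filter] using hcount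
  by_contra h
  push_neg at h
  have hget : l.getD (k-1) 0 = l.get ⟨k-1, hi⟩ := List.getD_eq_get l 0 ⟨k-1, hi⟩
  -- all elements from index k-1 on are > c
  have hdrop : ∀ x ∈ l.drop (k-1), ¬ (x ≤ c) := by
    intro x hx
    obtain ⟨j, hxj⟩ := List.mem_iff_get.1 hx
    have hjl : (k-1) + j.val < l.length := by
      have := j.isLt
      simp [List.length_drop] at this
      omega
    have : (l.drop (k-1)).get j = l.get ⟨(k-1) + j.val, hjl⟩ := by
      simp [List.getElem_drop]
    rw [this] at hxj
    have hle : l.get ⟨k-1, hi⟩ ≤ l.get ⟨(k-1) + j.val, hjl⟩ :=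
      hsorted.rel_get_of_le (by simp)
    intro hxc
    rw [← hxj] at hxc
    have : l.getD (k-1) 0 ≤ c := by rw [hget]; exact le_trans hle hxc
    exact absurd this (not_le.2 h)
  have hsplit : l.countP (fun x => decide (x ≤ c)) =
      (l.take (k-1)).countP (fun x => decide (x ≤ c)) +
      (l.drop (k-1)).countP (fun x => decide (x ≤ c)) := by
    conv_lhs => rw [← List.take_append_drop (k-1) l]
    rw [List.countP_append]
  have h1 : (l.take (k-1)).countP (fun x => decide (x ≤ c)) ≤ k - 1 := by
    calc (l.take (k-1)).countP (fun x => decide (x ≤ c)) ≤ (l.take (k-1)).length :=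
          List.countP_le_length
      _ ≤ k - 1 := by simp [List.length_take]
  have h2 : (l.drop (k-1)).countP (fun x => decide (x ≤ c)) = 0 := by
    rw [List.countP_eq_zero]
    intro x hx
    simpa using hdrop x hx
  omega

theorem stmt_11 (n f : ℕ) (hnf : n > 5 * f) (P U : Multiset ℝ)
    (hP : Multiset.card P = n) (hUP : U ≤ P) (m : ℕ) (hm : Multiset.card U = m)
    (hmf : m ≥ n - f) (B b : ℝ) (S : Multiset ℝ) (hSU : S ≤ U)
    (hScard : Multiset.card S ≥ m - f) (hS : ∀ x ∈ S, x ≤ B - b) :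
    ∀ p ∈ S, dest n f P p ≤ B - b := by
  classical
  intro p hp
  have hpB : p ≤ B - b := hS p hp
  have hSP : S ≤ P := le_trans hSU hUP
  have hSfilter : S ≤ P.filter (· ≤ B - b) := Multiset.le_filter.2 ⟨hSP, hS⟩
  have hcardS : Multiset.card S ≤ Multiset.card (P.filter (· ≤ B - b)) :=
    Multiset.card_le_card hSfilter
  have hmU : m ≤ n := by
    rw [← hm, ← hP]; exact Multiset.card_le_card hUP
  have hk : n - 2 * f ≥ 1 := by omega
  have hkth : kth P (n - 2 * f) ≤ B - b := by
    apply kth_le_of_count P (n - 2*f) (B - b) hk (by omega)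
    omega
  have hmax : max p (kth P (n - 2 * f)) ≤ B - b := max_le hpB hkth
  have hmin : min p (kth P (2 * f + 1)) ≤ B - b := le_trans (min_le_left _ _) hpB
  unfold dest
  linarith
end

section
/- Let n, f be natural numbers with n > 5f, let P be a multiset of n real numbers, and let U be a submultiset of P of cardinality m with m ≥ n − f. Let b be a real number. Then for every element u of U with u ≤ max U − b, the computed destination satisfies dest(P,u) ≤ max U − b/2. -/
/-- Every element of a multiset is at most its maximum. -/
lemma le_mmax_of_mem {U : Multiset ℝ} {u : ℝ} (hu : u ∈ U) : u ≤ mmax U := by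
  classical
  set L := U.sort (· ≤ ·) with hL
  have hsort : L.Pairwise (· ≤ ·) := Multiset.pairwise_sort (s := U) (r := (· ≤ ·))
  have hlen : L.length = Multiset.card U := U.length_sort _
  have hmem : u ∈ L := by rwa [hL, Multiset.mem_sort]
  obtain ⟨i, hi, hgi⟩ := List.mem_iff_getElem.mp hmem
  have hpos : 0 < L.length := lt_of_le_of_lt (Nat.zero_le _) hi
  have hidx : L.length - 1 < L.length := Nat.sub_lt hpos one_pos
  have : L[i] ≤ L[L.length - 1] := by
    rcases eq_or_lt_of_le (Nat.le_sub_one_of_lt hi) with h | h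
    · simp [h]
    · exact List.Pairwise.rel_get_of_lt hsort (a := ⟨i, hi⟩) (b := ⟨L.length - 1, hidx⟩) h
  rw [mmax, kth, ← hlen, List.getD_eq_getElem _ _ hidx]
  rw [← hgi]
  exact this

/-- The `(n-2f)`-th smallest element of `P` is at most any upper bound of `U`. -/
lemma kth_le_of_bound (n f : ℕ) (hnf : n > 5 * f) (P U : Multiset ℝ)
    (hP : Multiset.card P = n) (hUP : U ≤ P) (m : ℕ) (hm : Multiset.card U = m)
    (hmf : m ≥ n - f) (M : ℝ) (hM : ∀ x ∈ U, x ≤ M) :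
    kth P (n - 2 * f) ≤ M := by
  classical
  by_contra hc
  push_neg at hc
  set L := P.sort (· ≤ ·) with hL
  have hsort : L.Pairwise (· ≤ ·) := Multiset.pairwise_sort (s := P) (r := (· ≤ ·))
  have hlen : L.length = n := by rw [hL, Multiset.length_sort, hP]
  have hidx : n - 2 * f - 1 < L.length := by omega
  have hkth : kth P (n - 2 * f) = L[n - 2 * f - 1] := by
    rw [kth, List.getD_eq_getElem _ _ hidx]
  set D : List ℝ := L.drop (n - 2 * f - 1) with hD
  have hDlen : D.length = 2 * f + 1 := by rw [hD, List.length_drop]; omega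
  have hDall : ∀ x ∈ D, M < x := by
    intro x hx
    obtain ⟨j, hj, hgj⟩ := List.mem_iff_getElem.mp hx
    have hj' : n - 2 * f - 1 + j < L.length := by
      rw [hD, List.length_drop] at hj; omega
    have hgj2 : L[n - 2 * f - 1 + j] = x := by
      rw [← hgj]; exact (List.getElem_drop).symm
    have hmono : L[n - 2 * f - 1] ≤ L[n - 2 * f - 1 + j] := by
      rcases Nat.eq_zero_or_pos j with h | h
      · simp [h]
      · exact List.Pairwise.rel_get_of_lt hsort
          (a := ⟨n - 2 * f - 1, hidx⟩) (b := ⟨n - 2 * f - 1 + j, hj'⟩) (by simp; omega)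
    rw [hgj2] at hmono
    exact lt_of_lt_of_le (hkth ▸ hc) hmono
  have hDle : (↑D : Multiset ℝ) ≤ P :=
    calc (↑D : Multiset ℝ) ≤ ↑L := Multiset.coe_le.mpr (List.drop_sublist _ _).subperm
    _ = P := by rw [hL, Multiset.sort_eq]
  have h1 : Multiset.countP (fun x => M < x) (↑D : Multiset ℝ) = 2 * f + 1 := by
    rw [Multiset.countP_eq_card.mpr hDall]
    simpa using hDlen
  have h2 : Multiset.countP (fun x => M < x) (↑D : Multiset ℝ)
      ≤ Multiset.countP (fun x => M < x) P := Multiset.countP_le_of_le _ hDle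
  have h3 : Multiset.countP (fun x => M < x) U = 0 := by
    rw [Multiset.countP_eq_zero]
    intro a ha
    exact not_lt.mpr (hM a ha)
  have h4 : P = P - U + U := (tsub_add_cancel_of_le hUP).symm
  have h5 : Multiset.countP (fun x => M < x) P ≤ Multiset.card (P - U) := by
    conv_lhs => rw [h4]
    rw [Multiset.countP_add, h3, add_zero]
    exact Multiset.countP_le_card _ _
  have h6 : Multiset.card (P - U) = n - m := by
    rw [Multiset.card_sub hUP, hP, hm]
  omega

theorem stmt_12 (n f : ℕ) (hnf : n > 5 * f) (P U : Multiset ℝ)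
    (hP : Multiset.card P = n) (hUP : U ≤ P) (m : ℕ) (hm : Multiset.card U = m)
    (hmf : m ≥ n - f) (b : ℝ) :
    ∀ u ∈ U, u ≤ mmax U - b → dest n f P u ≤ mmax U - b / 2 := by
  intro u hu hub
  have hk : kth P (n - 2 * f) ≤ mmax U :=
    kth_le_of_bound n f hnf P U hP hUP m hm hmf (mmax U) (fun x hx => le_mmax_of_mem hx)
  have h1 : min u (kth P (2 * f + 1)) ≤ mmax U - b := le_trans (min_le_left _ _) hub
  have h2 : max u (kth P (n - 2 * f)) ≤ mmax U := max_le (le_mmax_of_mem hu) hk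
  rw [dest]
  linarith
end

section
/- Let n, f be natural numbers with n > 5f, let P be a multiset of n real numbers, and let U be a submultiset of P of cardinality m with m ≥ n − f. Let b be a real number and let p be an element of U. If the computed destination satisfies dest(P,p) < min U + b, then at least m − 2f elements of U (counted with multiplicity) are strictly less than min U + 2b; equivalently, the submultiset of elements of U that are ≥ min U + 2b has cardinality at most 2f. -/
section aux

lemma aux_le_get (L : List ℝ) (hs : L.Pairwise (· ≤ ·)) (i : ℕ) (hi : i < L.length)
    (c : ℝ) (h : L.countP (fun x => decide (x < c)) ≤ i) : c ≤ L.get ⟨i, hi⟩ := by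
  by_contra h'
  push_neg at h'
  have htake : ∀ x ∈ L.take (i+1), x < c := by
    intro x hx
    obtain ⟨j, hj, hx⟩ := List.mem_take_iff_getElem.1 hx
    have hj' : j < L.length := lt_of_lt_of_le (lt_of_lt_of_le hj (min_le_left _ _)) hi
    have : L.get ⟨j, hj'⟩ ≤ L.get ⟨i, hi⟩ := by
      apply hs.rel_get_of_le
      simp only [Fin.mk_le_mk]
      omega
    rw [← hx]
    exact lt_of_le_of_lt this h'
  have h1 : L.countP (fun x => decide (x < c)) =
      (L.take (i+1)).countP (fun x => decide (x < c)) +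
      (L.drop (i+1)).countP (fun x => decide (x < c)) := by
    rw [← List.countP_append, List.take_append_drop]
  have h2 : (L.take (i+1)).countP (fun x => decide (x < c)) = (L.take (i+1)).length := by
    rw [List.countP_eq_length]
    intro a ha
    simpa using htake a ha
  have h3 : (L.take (i+1)).length = i + 1 := by
    rw [List.length_take]
    omega
  omega

lemma aux_count_ge (L : List ℝ) (hs : L.Pairwise (· ≤ ·)) (i : ℕ) (hi : i < L.length)
    (c : ℝ) (h : L.get ⟨i, hi⟩ < c) :
    L.countP (fun x => decide (¬ x < c)) ≤ L.length - (i + 1) := by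
  have htake : ∀ x ∈ L.take (i+1), x < c := by
    intro x hx
    obtain ⟨j, hj, hx⟩ := List.mem_take_iff_getElem.1 hx
    have hj' : j < L.length := lt_of_lt_of_le (lt_of_lt_of_le hj (min_le_left _ _)) hi
    have : L.get ⟨j, hj'⟩ ≤ L.get ⟨i, hi⟩ := by
      apply hs.rel_get_of_le
      simp only [Fin.mk_le_mk]
      omega
    rw [← hx]
    exact lt_of_le_of_lt this h
  have h1 : L.countP (fun x => decide (¬ x < c)) =
      (L.take (i+1)).countP (fun x => decide (¬ x < c)) +
      (L.drop (i+1)).countP (fun x => decide (¬ x < c)) := by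
    rw [← List.countP_append, List.take_append_drop]
  have h2 : (L.take (i+1)).countP (fun x => decide (¬ x < c)) = 0 := by
    rw [List.countP_eq_zero]
    intro a ha
    simpa using htake a ha
  have h3 := List.countP_le_length (p := fun x => decide (¬ x < c)) (l := L.drop (i+1))
  rw [List.length_drop] at h3
  omega

end aux


theorem stmt_13 (n f : ℕ) (hnf : n > 5 * f) (P U : Multiset ℝ)
    (hP : Multiset.card P = n) (hUP : U ≤ P) (m : ℕ) (hm : Multiset.card U = m)
    (hmf : m ≥ n - f) (b : ℝ) (p : ℝ) (hp : p ∈ U)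
    (hdest : dest n f P p < mmin U + b) :
    Multiset.card (U.filter (fun x => x < mmin U + 2 * b)) ≥ m - 2 * f := by
  classical
  set LP := P.sort (· ≤ ·) with hLPdef
  set LU := U.sort (· ≤ ·) with hLUdef
  have hLP : (↑LP : Multiset ℝ) = P := Multiset.sort_eq _ _
  have hLU : (↑LU : Multiset ℝ) = U := Multiset.sort_eq _ _
  have hlenP : LP.length = n := by rw [← hP, ← hLP]; simp
  have hlenU : LU.length = m := by rw [← hm, ← hLU]; simp
  have hsP : LP.Pairwise (· ≤ ·) := Multiset.pairwise_sort _ _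
  have hsU : LU.Pairwise (· ≤ ·) := Multiset.pairwise_sort _ _
  have hmn : m ≤ n := by
    rw [← hm, ← hP]; exact Multiset.card_le_card hUP
  have hm0 : 0 < m := by
    rw [← hm]; exact Multiset.card_pos_iff_exists_mem.2 ⟨p, hp⟩
  -- mmin U is ≤ every element of U
  have hmin_le : ∀ x ∈ U, mmin U ≤ x := by
    intro x hx
    have hx' : x ∈ LU := by rw [← Multiset.mem_coe, hLU]; exact hx
    obtain ⟨j, hj⟩ := List.mem_iff_get.1 hx'
    have h0 : 0 < LU.length := by omega
    have : mmin U = LU.get ⟨0, h0⟩ := by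
      show (U.sort (· ≤ ·)).getD (1 - 1) 0 = _
      rw [← hLUdef]
      show LU.getD 0 0 = _
      rw [List.getD_eq_getElem LU 0 h0]
      rfl
    rw [this, ← hj]
    exact hsU.rel_get_of_le (by simp [Fin.le_def])
  -- at most f elements of P are below mmin U
  have hcount1 : Multiset.countP (fun x => x < mmin U) P ≤ f := by
    have hsplit : P - U + U = P := tsub_add_cancel_of_le hUP
    have : Multiset.countP (fun x => x < mmin U) U = 0 := by
      rw [Multiset.countP_eq_zero]
      intro a ha
      exact not_lt.2 (hmin_le a ha)
    have hPU : Multiset.countP (fun x => x < mmin U) (P - U) ≤ f := by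
      calc Multiset.countP (fun x => x < mmin U) (P - U)
          ≤ Multiset.card (P - U) := Multiset.countP_le_card _ _
        _ = n - m := by rw [Multiset.card_sub hUP, hP, hm]
        _ ≤ f := by omega
    calc Multiset.countP (fun x => x < mmin U) P
        = Multiset.countP (fun x => x < mmin U) (P - U) +
          Multiset.countP (fun x => x < mmin U) U := by
          rw [← Multiset.countP_add, hsplit]
      _ ≤ f := by omega
  have hcount1' : LP.countP (fun x => decide (x < mmin U)) ≤ f := by
    have := Multiset.coe_countP (fun x => x < mmin U) LP
    rw [hLP] at this
    omega
  -- mmin U ≤ P_{2f+1}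
  have hi1 : 2 * f < LP.length := by omega
  have hk1get : kth P (2 * f + 1) = LP.get ⟨2 * f, hi1⟩ := by
    show LP.getD (2 * f + 1 - 1) 0 = _
    have : 2 * f + 1 - 1 = 2 * f := by omega
    rw [this, List.getD_eq_getElem LP 0 hi1]
    simp [List.get_eq_getElem]
  have hk1 : mmin U ≤ kth P (2 * f + 1) := by
    rw [hk1get]
    exact aux_le_get LP hsP (2 * f) hi1 (mmin U) (by omega)
  -- p ≥ mmin U
  have hpge : mmin U ≤ p := hmin_le p hp
  -- from the destination bound, P_{n-2f} < mmin U + 2b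
  have hmaxlt : max p (kth P (n - 2 * f)) < mmin U + 2 * b := by
    have hminge : mmin U ≤ min p (kth P (2 * f + 1)) := le_min hpge hk1
    have := hdest
    unfold dest at this
    linarith [this, hminge]
  have hk2 : kth P (n - 2 * f) < mmin U + 2 * b :=
    lt_of_le_of_lt (le_max_right _ _) hmaxlt
  have hi2 : n - 2 * f - 1 < LP.length := by omega
  have hk2get : kth P (n - 2 * f) = LP.get ⟨n - 2 * f - 1, hi2⟩ := by
    show LP.getD (n - 2 * f - 1) 0 = _
    rw [List.getD_eq_getElem LP 0 hi2]
    simp [List.get_eq_getElem]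
  -- at most 2f elements of P are ≥ mmin U + 2b
  have hcount2 : LP.countP (fun x => decide (¬ x < mmin U + 2 * b)) ≤ 2 * f := by
    have := aux_count_ge LP hsP (n - 2 * f - 1) hi2 (mmin U + 2 * b)
      (by rw [← hk2get]; exact hk2)
    rw [hlenP] at this
    have h4 : n - (n - 2 * f - 1 + 1) = 2 * f := by omega
    omega
  have hcount2P : Multiset.countP (fun x => ¬ x < mmin U + 2 * b) P ≤ 2 * f := by
    have := Multiset.coe_countP (fun x => ¬ x < mmin U + 2 * b) LP
    rw [hLP] at this
    rw [this]
    exact hcount2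
  have hcount2U : Multiset.countP (fun x => ¬ x < mmin U + 2 * b) U ≤ 2 * f :=
    le_trans (Multiset.countP_le_of_le _ hUP) hcount2P
  -- conclude
  have hsplitU : Multiset.card (U.filter (fun x => x < mmin U + 2 * b)) +
      Multiset.card (U.filter (fun x => ¬ x < mmin U + 2 * b)) = m := by
    rw [← Multiset.card_add, Multiset.filter_add_not, hm]
  have hc : Multiset.card (U.filter (fun x => ¬ x < mmin U + 2 * b)) ≤ 2 * f := by
    rw [← Multiset.countP_eq_card_filter]
    exact hcount2U
  omega
end
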